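/- arXiv:1005.1586 — 3 statements merged into one kernel-verified Lean document; each statement's English description precedes it below -/
import Mathlib

section
/- For α ≥ 1, the function k ↦ ω_{α,+}(k)/k (phase velocity) with value √(gh₀) at k=0 is continuous and monotonically nonincreasing on [0,∞), and as k → ∞ it tends to √(gh₀)·√((α-1)/α). -/
open Filter Topology

/-- For `α ≥ 1`, the phase velocity
`c(k) = √(gh₀)·√((1+(α-1)(kh₀)²/3)/(1+α(kh₀)²/3))` satisfies `c(0) = √(gh₀)`, is
continuous and monotonically nonincreasing on `[0,∞)`, and tends to
`√(gh₀)·√((α-1)/α)` as `k → ∞`. -/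
theorem stmt_6 (g h₀ α : ℝ) (hg : 0 < g) (hh₀ : 0 < h₀) (hα : 1 ≤ α) :
    let c : ℝ → ℝ := fun k => Real.sqrt (g * h₀) *
      Real.sqrt ((1 + (α - 1) * (k * h₀) ^ 2 / 3) / (1 + α * (k * h₀) ^ 2 / 3))
    c 0 = Real.sqrt (g * h₀) ∧
    ContinuousOn c (Set.Ici 0) ∧
    AntitoneOn c (Set.Ici 0) ∧
    Tendsto c atTop (𝓝 (Real.sqrt (g * h₀) * Real.sqrt ((α - 1) / α))) := by
  intro c
  have hαpos : (0:ℝ) < α := lt_of_lt_of_le one_pos hα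
  have hden : ∀ k : ℝ, (0:ℝ) < 1 + α * (k * h₀) ^ 2 / 3 := by
    intro k
    have : 0 ≤ α * (k * h₀) ^ 2 / 3 := by positivity
    linarith
  have hnum : ∀ k : ℝ, (0:ℝ) ≤ 1 + (α - 1) * (k * h₀) ^ 2 / 3 := by
    intro k
    have : 0 ≤ (α - 1) * (k * h₀) ^ 2 / 3 := by
      have : (0:ℝ) ≤ α - 1 := by linarith
      positivity
    linarith
  refine ⟨?_, ?_, ?_, ?_⟩
  · simp [c]
  · apply Continuous.continuousOn
    apply Continuous.mul continuous_const
    apply Real.continuous_sqrt.comp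
    exact Continuous.div (by continuity) (by continuity) (fun k => (hden k).ne')
  · intro a ha b hb hab
    have ha' : (0:ℝ) ≤ a := ha
    have hx : (a * h₀) ^ 2 ≤ (b * h₀) ^ 2 := by
      have h1 : a * h₀ ≤ b * h₀ := by nlinarith
      have h2 : 0 ≤ a * h₀ := by positivity
      nlinarith
    have key : (1 + (α - 1) * (b * h₀) ^ 2 / 3) / (1 + α * (b * h₀) ^ 2 / 3) ≤
        (1 + (α - 1) * (a * h₀) ^ 2 / 3) / (1 + α * (a * h₀) ^ 2 / 3) := by
      rw [div_le_div_iff₀ (hden b) (hden a)]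
      nlinarith [hx, sq_nonneg (a * h₀), sq_nonneg (b * h₀)]
    exact mul_le_mul_of_nonneg_left (Real.sqrt_le_sqrt key) (Real.sqrt_nonneg _)
  · have h1 : Tendsto (fun k : ℝ => (k * h₀) ^ 2) atTop atTop := by
      exact (tendsto_pow_atTop (by norm_num)).comp
        (Tendsto.atTop_mul_const hh₀ tendsto_id)
    have h2 : Tendsto (fun k : ℝ => 3 / (k * h₀) ^ 2) atTop (𝓝 0) := by
      simpa using (tendsto_const_nhds (x := (3:ℝ))).div_atTop h1
    have h3 : Tendsto (fun k : ℝ => ((α - 1) + 3 / (k * h₀) ^ 2) / (α + 3 / (k * h₀) ^ 2))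
        atTop (𝓝 ((α - 1) / α)) := by
      have := Tendsto.div ((tendsto_const_nhds (x := α - 1)).add h2)
        ((tendsto_const_nhds (x := α)).add h2) (by simpa using hαpos.ne')
      simpa [Pi.div_def] using this
    have heq : ∀ᶠ k : ℝ in atTop,
        ((α - 1) + 3 / (k * h₀) ^ 2) / (α + 3 / (k * h₀) ^ 2)
          = (1 + (α - 1) * (k * h₀) ^ 2 / 3) / (1 + α * (k * h₀) ^ 2 / 3) := by
      filter_upwards [eventually_gt_atTop 0] with k hk
      have hx : (0:ℝ) < (k * h₀) ^ 2 := by positivity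
      rw [div_eq_div_iff (by positivity) (hden k).ne']
      field_simp
      ring
    have h4 : Tendsto (fun k : ℝ =>
        (1 + (α - 1) * (k * h₀) ^ 2 / 3) / (1 + α * (k * h₀) ^ 2 / 3))
        atTop (𝓝 ((α - 1) / α)) := h3.congr' heq
    exact ((Real.continuous_sqrt.tendsto _).comp h4).const_mul _
end

section
/- The nodal-to-average reconstruction formula is exact to fourth order: if w : ℝ → ℝ is C⁴ and w̄ᵢ = (1/δ)∫_{x_{i-1}}^{x_i} w with x_j = jδ, then w̄ᵢ - (-(1/24)w(x_{i-2}) + (13/24)w(x_{i-1}) + (13/24)w(x_i) - (1/24)w(x_{i+1})) = O(δ⁴). -/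
open intervalIntegral
open Set


lemma iterEq {w : ℝ → ℝ} (hw : ContDiff ℝ 4 w) {s : Set ℝ} (hs : UniqueDiffOn ℝ s) :
    ∀ n : ℕ, n ≤ 4 → ∀ x ∈ s, iteratedDerivWithin n w s x = iteratedDeriv n w x := by
  intro n
  induction n with
  | zero => intro _ x hx; simp
  | succ n ih =>
    intro hn x hx
    rw [iteratedDerivWithin_succ,
      derivWithin_congr (fun y hy => ih (by omega) y hy) (ih (by omega) x hx),
      ((hw.differentiable_iteratedDeriv n (by exact_mod_cast (by omega : n < 4))) x).derivWithin
        (hs x hx), ← iteratedDeriv_succ]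

set_option maxHeartbeats 1000000 in

/-- Fourth-order accuracy of the nodal-to-average reconstruction:
`w̄ᵢ - (-(1/24)w(x_{i-2}) + (13/24)w(x_{i-1}) + (13/24)w(x_i) - (1/24)w(x_{i+1}))`
is bounded by `C·M·δ⁴` for an absolute constant `C`. -/
theorem stmt_14 :
    ∃ C : ℝ, 0 < C ∧ ∀ (w : ℝ → ℝ) (M δ : ℝ) (i : ℤ),
      ContDiff ℝ 4 w → 0 < δ →
      (∀ y ∈ Set.Icc (((i : ℝ) - 2) * δ) (((i : ℝ) + 1) * δ), |iteratedDeriv 4 w y| ≤ M) →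
      |(1 / δ) * (∫ s in (((i : ℝ) - 1) * δ)..((i : ℝ) * δ), w s)
        - (-(1 / 24) * w (((i : ℝ) - 2) * δ) + (13 / 24) * w (((i : ℝ) - 1) * δ)
            + (13 / 24) * w ((i : ℝ) * δ) - (1 / 24) * w (((i : ℝ) + 1) * δ))|
      ≤ C * M * δ ^ 4 := by
  refine ⟨30, by norm_num, fun w M δ i hw hδ hM => ?_⟩
  set a : ℝ := ((i : ℝ) - 2) * δ with ha
  have e1 : ((i : ℝ) - 1) * δ = a + δ := by rw [ha]; ring
  have e2 : ((i : ℝ)) * δ = a + 2 * δ := by rw [ha]; ring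
  have e3 : ((i : ℝ) + 1) * δ = a + 3 * δ := by rw [ha]; ring
  clear_value a
  rw [e3] at hM
  rw [e1, e2, e3]
  have hab : a < a + 3 * δ := by linarith
  have hud : UniqueDiffOn ℝ (Icc a (a + 3 * δ)) := uniqueDiffOn_Icc hab
  have haI : a ∈ Icc a (a + 3 * δ) := ⟨le_refl _, hab.le⟩
  have hM0 : 0 ≤ M := le_trans (abs_nonneg _) (hM a haI)
  set P : ℝ → ℝ := fun x => w a + iteratedDeriv 1 w a * (x - a)
      + iteratedDeriv 2 w a / 2 * (x - a) ^ 2 + iteratedDeriv 3 w a / 6 * (x - a) ^ 3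
    with hP
  have hT : ∀ x : ℝ, taylorWithinEval w 3 (Icc a (a + 3 * δ)) a x = P x := by
    intro x
    have h3 : (3 : ℕ) = 2 + 1 := rfl
    rw [h3, taylorWithinEval_succ, taylorWithinEval_succ, taylorWithinEval_succ,
      taylor_within_zero_eval, iterEq hw hud 1 (by norm_num) a haI,
      iterEq hw hud 2 (by norm_num) a haI, iterEq hw hud 3 (by norm_num) a haI]
    simp only [hP, smul_eq_mul, Nat.factorial]
    push_cast
    ring
  set K : ℝ := 27 / 2 * M * δ ^ 4 with hK
  have hRP : ∀ x ∈ Icc a (a + 3 * δ), |w x - P x| ≤ K := by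
    intro x hx
    have hbd := taylor_mean_remainder_bound (n := 3) hab.le
      (hw.contDiffOn (s := Icc a (a + 3 * δ))) hx
      (fun y hy => by rw [iterEq hw hud 4 (by norm_num) y hy]; exact hM y hy)
    rw [hT x, Real.norm_eq_abs] at hbd
    refine hbd.trans ?_
    have hx4 : (x - a) ^ 4 ≤ (3 * δ) ^ 4 := by
      have h1 : 0 ≤ x - a := by linarith [hx.1]
      have h2 : x - a ≤ 3 * δ := by linarith [hx.2]
      exact pow_le_pow_left₀ h1 h2 4
    have h6 : ((Nat.factorial 3 : ℕ) : ℝ) = 6 := by norm_num [Nat.factorial]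
    rw [show (3 + 1) = 4 from rfl, h6, hK]
    nlinarith [mul_le_mul_of_nonneg_left hx4 hM0]
  have hPc : Continuous P := by rw [hP]; fun_prop
  have hIntP : (∫ s in (a + δ)..(a + 2 * δ), P s)
      = w a * δ + iteratedDeriv 1 w a * (3 / 2) * δ ^ 2
        + iteratedDeriv 2 w a * (7 / 6) * δ ^ 3 + iteratedDeriv 3 w a * (5 / 8) * δ ^ 4 := by
    have hF : ∀ x ∈ Set.uIcc (a + δ) (a + 2 * δ),
        HasDerivAt (fun x => w a * (x - a) + iteratedDeriv 1 w a / 2 * (x - a) ^ 2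
          + iteratedDeriv 2 w a / 6 * (x - a) ^ 3 + iteratedDeriv 3 w a / 24 * (x - a) ^ 4)
          (P x) x := by
      intro x _
      have h1 : HasDerivAt (fun x : ℝ => x - a) 1 x := (hasDerivAt_id x).sub_const a
      have := (((h1.const_mul (w a)).add ((h1.pow 2).const_mul (iteratedDeriv 1 w a / 2))).add
        ((h1.pow 3).const_mul (iteratedDeriv 2 w a / 6))).add
        ((h1.pow 4).const_mul (iteratedDeriv 3 w a / 24))
      refine this.congr_deriv ?_
      simp only [hP]
      push_cast
      ring
    rw [integral_eq_sub_of_hasDerivAt hF (hPc.intervalIntegrable _ _)]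
    ring
  have hsplit : (∫ s in (a + δ)..(a + 2 * δ), w s)
      = (∫ s in (a + δ)..(a + 2 * δ), (w s - P s)) + ∫ s in (a + δ)..(a + 2 * δ), P s := by
    rw [← integral_add (f := fun s => w s - P s) ((hw.continuous.sub hPc).intervalIntegrable _ _)
      (hPc.intervalIntegrable _ _)]
    simp
  set IR : ℝ := ∫ s in (a + δ)..(a + 2 * δ), (w s - P s) with hIR
  have hIRb : |IR| ≤ K * δ := by
    have hb := norm_integral_le_of_norm_le_const (a := a + δ) (b := a + 2 * δ) (C := K)
      (f := fun s => w s - P s) ?_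
    · rw [Real.norm_eq_abs] at hb
      refine le_trans hb (le_of_eq ?_)
      rw [show a + 2 * δ - (a + δ) = δ from by ring, abs_of_pos hδ]
    · intro x hx
      rw [Set.uIoc_of_le (by linarith)] at hx
      exact hRP x ⟨by linarith [hx.1.le], by linarith [hx.2]⟩
  have hIRb' : |(1 / δ) * IR| ≤ K := by
    rw [abs_mul, abs_of_pos (by positivity : (0:ℝ) < 1 / δ)]
    calc (1 / δ) * |IR| ≤ (1 / δ) * (K * δ) := by gcongr
      _ = K := by field_simp
  have key : (1 / δ) * (∫ s in (a + δ)..(a + 2 * δ), w s)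
        - (-(1 / 24) * w a + (13 / 24) * w (a + δ)
            + (13 / 24) * w (a + 2 * δ) - (1 / 24) * w (a + 3 * δ))
      = (1 / δ) * IR - (-(1 / 24) * (w a - P a) + (13 / 24) * (w (a + δ) - P (a + δ))
            + (13 / 24) * (w (a + 2 * δ) - P (a + 2 * δ))
            - (1 / 24) * (w (a + 3 * δ) - P (a + 3 * δ))) := by
    rw [hsplit, hIntP]
    simp only [hP]
    field_simp
    ring
  rw [key]
  clear_value K P IR
  have h0 := hRP a haI
  have h1 := hRP (a + δ) ⟨by linarith, by linarith⟩
  have h2 := hRP (a + 2 * δ) ⟨by linarith, by linarith⟩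
  have h3 := hRP (a + 3 * δ) ⟨by linarith, le_refl _⟩
  rw [abs_le] at hIRb' h0 h1 h2 h3 ⊢
  have hKnn : 0 ≤ K := by
    rw [hK]; positivity
  have h30 : 30 * M * δ ^ 4 = (20 / 9) * K := by rw [hK]; ring
  constructor <;>
    linarith [hIRb'.1, hIRb'.2, h0.1, h0.2, h1.1, h1.2, h2.1, h2.2, h3.1, h3.2, hKnn, h30]
end

section
/- Let S₁(δ) be the 2×2 complex matrix [[α₁(δ), α₂(δ)ik],[gh₀α₂(δ)ik, α₁(δ)]] with α₁, α₂ as in the RK4 discretization of the linearized shallow water system, and S₂(δ) = [[1,0],[gh₀γikδ,1]]. Then the trace of M(δ) := (S₁(δ/2) S₂(δ) S₁(δ/2) - I)/δ satisfies tr M(δ) = -g h₀ (1+γ) k² δ + O(δ³) as δ → 0. -/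
open Complex Matrix Filter Topology Asymptotics

set_option maxHeartbeats 2000000 in
/-- With `S₁(δ)` the RK4 amplification matrix of the linearized shallow water system and
`S₂(δ) = [[1,0],[gh₀γikδ,1]]`, the trace of `M(δ) = (S₁(δ/2)S₂(δ)S₁(δ/2) - I)/δ`
satisfies `tr M(δ) = -g h₀ (1+γ) k² δ + O(δ³)` as `δ → 0`. -/
theorem stmt_19 (k g h₀ γ : ℝ) (hg : 0 < g) (hh₀ : 0 < h₀) :
    let α₁ : ℝ → ℂ := fun δ =>
      ((1 + δ ^ 2 / 2 * (-(g * h₀ * k ^ 2)) + δ ^ 4 / 24 * (g * h₀ * k ^ 2) ^ 2 : ℝ) : ℂ)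
    let α₂ : ℝ → ℂ := fun δ => ((δ + δ ^ 3 / 6 * (-(g * h₀ * k ^ 2)) : ℝ) : ℂ)
    let S₁ : ℝ → Matrix (Fin 2) (Fin 2) ℂ := fun δ =>
      !![α₁ δ, α₂ δ * (Complex.I * k); (g : ℂ) * h₀ * α₂ δ * (Complex.I * k), α₁ δ]
    let S₂ : ℝ → Matrix (Fin 2) (Fin 2) ℂ := fun δ =>
      !![1, 0; (g : ℂ) * h₀ * γ * Complex.I * k * δ, 1]
    let M : ℝ → Matrix (Fin 2) (Fin 2) ℂ := fun δ =>
      ((δ : ℂ)⁻¹) • (S₁ (δ / 2) * S₂ δ * S₁ (δ / 2) - 1)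
    (fun δ : ℝ => Matrix.trace (M δ) - ((-(g * h₀ * (1 + γ) * k ^ 2 * δ) : ℝ) : ℂ))
      =O[𝓝[≠] (0 : ℝ)] fun δ : ℝ => δ ^ 3 := by
  intro α₁ α₂ S₁ S₂ M
  set A : ℂ := ((g : ℝ) : ℂ) * ((h₀ : ℝ) : ℂ) * ((k : ℝ) : ℂ) ^ 2 with hA
  set C : ℝ → ℂ := fun δ => A ^ 2 * (1 / 12 + (γ : ℂ) / 6)
      - (δ : ℂ) ^ 2 * A ^ 3 * (5 / 2304 + (γ : ℂ) / 128)
      + (δ : ℂ) ^ 4 * A ^ 4 * (1 / 73728 + (γ : ℂ) / 9216) with hC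
  have heq : (fun δ : ℝ => Matrix.trace (M δ) - ((-(g * h₀ * (1 + γ) * k ^ 2 * δ) : ℝ) : ℂ))
      =ᶠ[𝓝[≠] (0 : ℝ)] fun δ : ℝ => (δ : ℂ) ^ 3 * C δ := by
    filter_upwards [self_mem_nhdsWithin] with δ (hδ : δ ≠ 0)
    have hδ' : (δ : ℂ) ≠ 0 := Complex.ofReal_ne_zero.mpr hδ
    have hI : Complex.I ^ 2 = -1 := Complex.I_sq
    simp only [M, S₁, S₂, α₁, α₂, Matrix.trace_smul, Matrix.trace_sub, smul_eq_mul]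
    rw [Matrix.mul_fin_two, Matrix.mul_fin_two]
    simp only [Matrix.trace_fin_two_of, Matrix.trace_one, Fintype.card_fin, hC, hA]
    push_cast
    field_simp
    ring_nf
    rw [Complex.I_sq]
    ring
  refine (Asymptotics.IsBigO.congr' ?_ heq.symm (EventuallyEq.refl _ _))
  have h1 : (fun δ : ℝ => C δ) =O[𝓝[≠] (0 : ℝ)] (fun _ : ℝ => (1 : ℝ)) := by
    have hc : ContinuousAt C 0 := by
      simp only [hC]; fun_prop
    exact (hc.continuousWithinAt.isBigO_one ℝ)
  have h2 : (fun δ : ℝ => (δ : ℂ) ^ 3) =O[𝓝[≠] (0 : ℝ)] (fun δ : ℝ => δ ^ 3) := by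
    apply Asymptotics.isBigO_of_le
    intro x
    simp [abs_pow]
  simpa using h2.mul h1
end
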